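/- Slice Relation: Let A be a sequence of distinct reals with EST points t_i = (a_i^+, a_i^-). Suppose i < j and there exists a natural number y with a_i^- ≤ y ≤ a_j^- such that no index k ≤ j satisfies a_k^- = y and a_k^+ > a_i^+. Then a_i > a_j. -/

import Mathlib

/-- Length of the longest strictly increasing subsequence of `a` ending at index `i`. -/
noncomputable def incLen {n : ℕ} (a : Fin n → ℝ) (i : Fin n) : ℕ :=
  sSup {m | ∃ σ : Fin (m + 1) → Fin n,
    StrictMono σ ∧ StrictMono (a ∘ σ) ∧ σ (Fin.last m) = i} + 1

/-- Length of the longest strictly decreasing subsequence of `a` ending at index `i`. -/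
noncomputable def decLen {n : ℕ} (a : Fin n → ℝ) (i : Fin n) : ℕ :=
  sSup {m | ∃ σ : Fin (m + 1) → Fin n,
    StrictMono σ ∧ StrictAnti (a ∘ σ) ∧ σ (Fin.last m) = i} + 1

namespace SliceAux

/-- The set whose sup (plus one) is `decLen`. -/
def D {n : ℕ} (a : Fin n → ℝ) (k : Fin n) : Set ℕ :=
  {m | ∃ σ : Fin (m + 1) → Fin n,
    StrictMono σ ∧ StrictAnti (a ∘ σ) ∧ σ (Fin.last m) = k}

lemma decLen_eq {n : ℕ} (a : Fin n → ℝ) (k : Fin n) : decLen a k = sSup (D a k) + 1 := rfl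

lemma zero_mem_D {n : ℕ} (a : Fin n → ℝ) (k : Fin n) : 0 ∈ D a k :=
  ⟨fun _ => k, fun x y h => absurd h (by omega), fun x y h => absurd h (by omega), rfl⟩

lemma bddAbove_D {n : ℕ} (a : Fin n → ℝ) (k : Fin n) : BddAbove (D a k) := by
  refine ⟨n, fun m hm => ?_⟩
  obtain ⟨σ, hσ, -, -⟩ := hm
  have := Fintype.card_le_of_injective σ hσ.injective
  simp only [Fintype.card_fin] at this
  omega

lemma sSup_mem_D {n : ℕ} (a : Fin n → ℝ) (k : Fin n) : sSup (D a k) ∈ D a k :=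
  Nat.sSup_mem ⟨0, zero_mem_D a k⟩ (bddAbove_D a k)

lemma le_sSup_D {n : ℕ} (a : Fin n → ℝ) (k : Fin n) {m : ℕ} (hm : m ∈ D a k) :
    m ≤ sSup (D a k) := le_csSup (bddAbove_D a k) hm

lemma strictMono_snoc {m : ℕ} {α : Type*} [Preorder α] {f : Fin (m + 1) → α} {x : α}
    (hf : StrictMono f) (hx : f (Fin.last m) < x) : StrictMono (Fin.snoc f x) := by
  rw [Fin.strictMono_iff_lt_succ]
  intro i
  rcases Fin.eq_castSucc_or_eq_last i with ⟨i', rfl⟩ | rfl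
  · rw [Fin.succ_castSucc, Fin.snoc_castSucc, Fin.snoc_castSucc]
    exact hf Fin.castSucc_lt_succ
  · rw [Fin.succ_last, Fin.snoc_last, Fin.snoc_castSucc]
    exact hx

lemma strictAnti_snoc {m : ℕ} {α : Type*} [Preorder α] {f : Fin (m + 1) → α} {x : α}
    (hf : StrictAnti f) (hx : x < f (Fin.last m)) : StrictAnti (Fin.snoc f x) := by
  rw [Fin.strictAnti_iff_succ_lt]
  intro i
  rcases Fin.eq_castSucc_or_eq_last i with ⟨i', rfl⟩ | rfl
  · rw [Fin.succ_castSucc, Fin.snoc_castSucc, Fin.snoc_castSucc]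
    exact hf Fin.castSucc_lt_succ
  · rw [Fin.succ_last, Fin.snoc_last, Fin.snoc_castSucc]
    exact hx

/-- Extension: a decreasing pair extends any decreasing subsequence. -/
lemma decLen_extend {n : ℕ} (a : Fin n → ℝ) {k k' : Fin n} (hkk : k < k') (hak : a k' < a k) :
    decLen a k + 1 ≤ decLen a k' := by
  obtain ⟨σ, h1, h2, h3⟩ := sSup_mem_D a k
  have hmem : sSup (D a k) + 1 ∈ D a k' := by
    refine ⟨Fin.snoc σ k', strictMono_snoc h1 (by rw [h3]; exact hkk), ?_, Fin.snoc_last _ _⟩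
    rw [Fin.comp_snoc]
    refine strictAnti_snoc h2 ?_
    show a k' < a (σ (Fin.last _))
    rw [h3]; exact hak
  rw [decLen_eq, decLen_eq]
  have := le_sSup_D a k' hmem
  omega

/-- Predecessor: a point with `decLen ≥ 2` has a predecessor with `decLen` one less. -/
lemma decLen_pred {n : ℕ} (a : Fin n → ℝ) {k : Fin n} (hk : 2 ≤ decLen a k) :
    ∃ k', k' < k ∧ a k < a k' ∧ decLen a k' + 1 = decLen a k := by
  obtain ⟨e, he⟩ : ∃ e, sSup (D a k) = e + 1 := by
    rw [decLen_eq] at hk; exact ⟨sSup (D a k) - 1, by omega⟩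
  have hmem := sSup_mem_D a k
  rw [he] at hmem
  obtain ⟨σ, h1, h2, h3⟩ := hmem
  refine ⟨σ (Fin.castSucc (Fin.last e)), ?_, ?_, ?_⟩
  · rw [← h3]; exact h1 (Fin.castSucc_lt_last _)
  · rw [← h3]; exact h2 (Fin.castSucc_lt_last _)
  · have hlow : e ∈ D a (σ (Fin.castSucc (Fin.last e))) :=
      ⟨σ ∘ Fin.castSucc, h1.comp Fin.strictMono_castSucc,
       h2.comp_strictMono Fin.strictMono_castSucc, rfl⟩
    have h4 := le_sSup_D a _ hlow
    have h5 := decLen_extend a (k := σ (Fin.castSucc (Fin.last e))) (k' := k)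
      (by rw [← h3]; exact h1 (Fin.castSucc_lt_last _))
      (by rw [← h3]; exact h2 (Fin.castSucc_lt_last _))
    rw [decLen_eq, decLen_eq, he] at *
    omega

/-- Descent: every level `y` between 1 and `decLen a k` is attained weakly before `k`
with a value at least `a k`. -/
lemma descent {n : ℕ} (a : Fin n → ℝ) (y : ℕ) (hy : 1 ≤ y) :
    ∀ d (k : Fin n), decLen a k ≤ d + y → y ≤ decLen a k →
      ∃ k', k' ≤ k ∧ a k ≤ a k' ∧ decLen a k' = y := by
  intro d
  induction d with
  | zero =>
    intro k h1 h2
    exact ⟨k, le_refl _, le_refl _, by omega⟩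
  | succ d ih =>
    intro k h1 h2
    by_cases hdk : decLen a k = y
    · exact ⟨k, le_refl _, le_refl _, hdk⟩
    · obtain ⟨k', hk1, hk2, hk3⟩ := decLen_pred a (k := k) (by omega)
      obtain ⟨k'', h5, h6, h7⟩ := ih k' (by omega) (by omega)
      exact ⟨k'', le_trans h5 hk1.le, le_trans hk2.le h6, h7⟩

lemma incLen_eq_decLen_neg {n : ℕ} (a : Fin n → ℝ) (k : Fin n) :
    incLen a k = decLen (fun x => -a x) k := by
  unfold incLen decLen
  congr 2
  ext m
  constructor <;> rintro ⟨σ, h1, h2, h3⟩ <;> refine ⟨σ, h1, ?_, h3⟩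
  · intro x y hxy
    simp only [Function.comp]
    exact neg_lt_neg (h2 hxy)
  · intro x y hxy
    have := h2 hxy
    simp only [Function.comp] at this ⊢
    exact lt_of_neg_lt_neg this

end SliceAux

open SliceAux in
theorem slice_relation {n : ℕ} (a : Fin n → ℝ) (ha : Function.Injective a)
    (i j : Fin n) (hij : i < j) (y : ℕ)
    (hy1 : decLen a i ≤ y) (hy2 : y ≤ decLen a j)
    (hempty : ∀ k : Fin n, k ≤ j → ¬(decLen a k = y ∧ incLen a k > incLen a i)) :
    a i > a j := by
  by_contra h
  push_neg at h
  have hne : a i ≠ a j := fun he => absurd (ha he) hij.ne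
  have hij' : a i < a j := lt_of_le_of_ne h hne
  have hy0 : 1 ≤ y := le_trans (by rw [decLen_eq]; omega) hy1
  obtain ⟨k, hk1, hk2, hk3⟩ := descent a y hy0 (decLen a j) j (by omega) hy2
  have hik : i < k := by
    rcases lt_trichotomy i k with h' | h' | h'
    · exact h'
    · exact absurd (h' ▸ (hij'.trans_le hk2)) (lt_irrefl _)
    · have := decLen_extend a h' (hij'.trans_le hk2)
      omega
  have hinc : incLen a i + 1 ≤ incLen a k := by
    rw [incLen_eq_decLen_neg, incLen_eq_decLen_neg]
    exact decLen_extend _ hik (neg_lt_neg (hij'.trans_le hk2))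
  exact hempty k hk1 ⟨hk3, by omega⟩
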